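/- Let m ≥ 0 and K ≥ 1 be integers. Let M be the K×K matrix with rational entries M_{i,j} = C(m + 2(j−1), j−i) for 1 ≤ i, j ≤ K, and let N be the K×K matrix with entries N_{i,j} = (−1)^{i+j} ( C(m + i + j − 2, m + 2i − 2) + C(m + i + j − 3, m + 2i − 2) ). Then M·N equals the K×K identity matrix; in particular M is invertible and N = M^{−1}. -/

import Mathlib

/-- Integer binomial coefficient `C(a,b)` with the convention that it is `0`
whenever `a < 0` or `b < 0` (and, via `Nat.choose`, whenever `b > a`). -/
def intChoose (a b : ℤ) : ℤ :=
  if 0 ≤ a ∧ 0 ≤ b then (Nat.choose a.toNat b.toNat : ℤ) else 0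

lemma ic_pos {a b : ℤ} (ha : 0 ≤ a) (hb : 0 ≤ b) :
    intChoose a b = (a.toNat.choose b.toNat : ℤ) := by
  simp [intChoose, ha, hb]

lemma ic_neg_left {a : ℤ} (b : ℤ) (ha : a < 0) : intChoose a b = 0 := by
  simp [intChoose, not_le.2 ha]

lemma ic_neg_right (a : ℤ) {b : ℤ} (hb : b < 0) : intChoose a b = 0 := by
  simp [intChoose, not_le.2 hb]

lemma ic_zero_right {a : ℤ} (ha : 0 ≤ a) : intChoose a 0 = 1 := by
  simp [intChoose, ha]

lemma ic_lt {a b : ℤ} (h : a < b) : intChoose a b = 0 := by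
  rcases lt_or_ge a 0 with h0 | h0
  · exact ic_neg_left b h0
  · have hb : 0 ≤ b := le_of_lt (lt_of_le_of_lt h0 h)
    rw [ic_pos h0 hb, Nat.choose_eq_zero_of_lt (by omega)]
    simp

lemma ic_pascal {a : ℤ} (b : ℤ) (ha : 1 ≤ a) :
    intChoose a b = intChoose (a-1) b + intChoose (a-1) (b-1) := by
  rcases lt_trichotomy b 0 with hb | hb | hb
  · rw [ic_neg_right _ hb, ic_neg_right _ hb, ic_neg_right _ (by omega)]; ring
  · subst hb
    rw [ic_zero_right (by omega), ic_zero_right (by omega), ic_neg_right _ (by norm_num)]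
    ring
  · have h1 : a.toNat = (a-1).toNat + 1 := by omega
    have h2 : b.toNat = (b-1).toNat + 1 := by omega
    rw [ic_pos (by omega) (by omega), ic_pos (by omega) (by omega),
      ic_pos (by omega) (by omega), h1, h2, Nat.choose_succ_succ, Nat.succ_eq_add_one]
    push_cast
    ring

lemma ic_symm {a : ℤ} (b : ℤ) (ha : 0 ≤ a) : intChoose a b = intChoose a (a - b) := by
  rcases lt_or_ge b 0 with hb | hb
  · rw [ic_neg_right _ hb, ic_lt (by omega)]
  · rcases lt_or_ge a b with hab | hab
    · rw [ic_lt hab, ic_neg_right _ (by omega)]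
    · rw [ic_pos ha hb, ic_pos ha (by omega)]
      have : (a - b).toNat = a.toNat - b.toNat := by omega
      rw [this, Nat.choose_symm (by omega)]

/-- The alternating binomial sum. -/
def icF (a : ℤ) (n : ℕ) : ℤ :=
  ∑ s ∈ Finset.range (n+1),
    (-1)^s * intChoose (a + 2*s) s * intChoose (a + n + s) ((n : ℤ) - s)

lemma icF_zero {a : ℤ} (ha : 0 ≤ a) : icF a 0 = 1 := by
  simp [icF, ic_zero_right ha]

lemma icF_neg_one (n : ℕ) : icF (-1) (n+1) = - icF 1 n := by
  rw [icF, Finset.sum_range_succ', icF, ← Finset.sum_neg_distrib]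
  have h0 : (-1:ℤ)^(0:ℕ) * intChoose (-1 + 2*((0:ℕ):ℤ)) ((0:ℕ):ℤ) *
      intChoose (-1 + ((n+1 : ℕ):ℤ) + ((0:ℕ):ℤ)) (((n+1:ℕ):ℤ) - ((0:ℕ):ℤ)) = 0 := by
    norm_num [ic_neg_left _ (show (-1:ℤ) < 0 by norm_num)]
  rw [h0, add_zero]
  refine Finset.sum_congr rfl (fun s _ => ?_)
  have e1 : intChoose (-1 + 2*((s+1:ℕ):ℤ)) ((s+1:ℕ):ℤ) = intChoose (1 + 2*(s:ℤ)) (s:ℤ) := by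
    push_cast
    rw [show (-1 + 2*((s:ℤ)+1)) = 1 + 2*(s:ℤ) by ring, ic_symm _ (by positivity),
      show (1 + 2*(s:ℤ)) - ((s:ℤ)+1) = (s:ℤ) by ring]
  have e2 : intChoose (-1 + ((n+1:ℕ):ℤ) + ((s+1:ℕ):ℤ)) (((n+1:ℕ):ℤ) - ((s+1:ℕ):ℤ))
      = intChoose (1 + (n:ℤ) + (s:ℤ)) ((n:ℤ) - (s:ℤ)) := by
    push_cast
    rw [show (-1 + ((n:ℤ)+1) + ((s:ℤ)+1)) = 1 + (n:ℤ) + (s:ℤ) by ring,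
      show (((n:ℤ)+1) - ((s:ℤ)+1)) = (n:ℤ) - (s:ℤ) by ring]
  rw [e1, e2, pow_succ]
  ring

lemma icF_split {a : ℤ} (ha : -1 ≤ a) (n : ℕ) :
    icF a (n+1) =
      (∑ s ∈ Finset.range (n+2),
        (-1)^s * intChoose (a + 2*s) s * intChoose (a + (n+1) + s - 1) (((n:ℤ)+1) - s))
      + icF a n := by
  have term : ∀ s : ℕ,
      intChoose (a + (n+1:ℕ) + s) (((n+1:ℕ):ℤ) - s) =
      intChoose (a + (n+1) + s - 1) (((n:ℤ)+1) - s) + intChoose (a + n + s) ((n:ℤ) - s) := by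
    intro s
    rcases eq_or_lt_of_le (show (0:ℤ) ≤ a + (n+1:ℕ) + s by push_cast; omega) with h | h
    · have ha' : a = -1 := by push_cast at h ⊢; omega
      have hn : (n:ℤ) = 0 := by push_cast at h; omega
      have hs : (s:ℤ) = 0 := by push_cast at h; omega
      rw [← h, ic_lt (by push_cast; omega), ic_neg_left _ (by push_cast; omega),
        ic_neg_left _ (by push_cast; omega)]
      ring
    · rw [ic_pascal _ (by omega),
        show a + ((n+1:ℕ):ℤ) + s - 1 = a + ((n:ℤ)+1) + s - 1 by push_cast; ring,
        show ((n+1:ℕ):ℤ) - s - 1 = (n:ℤ) - s by push_cast; ring,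
        show a + ((n:ℤ)+1) + s - 1 = a + n + s by ring]
      push_cast
      ring
  rw [icF]
  calc ∑ s ∈ Finset.range (n+2),
        (-1)^s * intChoose (a + 2*s) s * intChoose (a + (n+1:ℕ) + s) (((n+1:ℕ):ℤ) - s)
      = ∑ s ∈ Finset.range (n+2),
        ((-1)^s * intChoose (a + 2*s) s * intChoose (a + (n+1) + s - 1) (((n:ℤ)+1) - s)
         + (-1)^s * intChoose (a + 2*s) s * intChoose (a + n + s) ((n:ℤ) - s)) := by
        refine Finset.sum_congr rfl (fun s _ => ?_)
        rw [term s]; ring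
    _ = _ := by
        rw [Finset.sum_add_distrib]
        congr 1
        rw [Finset.sum_range_succ, icF]
        rw [ic_neg_right _ (show (n:ℤ) - ((n+1:ℕ):ℤ) < 0 by push_cast; omega)]
        ring

lemma icF_split2 {a : ℤ} (ha : 0 ≤ a) (n : ℕ) :
    (∑ s ∈ Finset.range (n+2),
        (-1)^s * intChoose (a + 2*s) s * intChoose (a + (n+1) + s - 1) (((n:ℤ)+1) - s))
      = icF (a-1) (n+1) - icF (a+1) n := by
  have term : ∀ s : ℕ,
      (-1:ℤ)^s * intChoose (a + 2*s) s * intChoose (a + (n+1) + s - 1) (((n:ℤ)+1) - s) =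
      (-1)^s * intChoose (a - 1 + 2*s) s * intChoose (a - 1 + (n+1:ℕ) + s) (((n+1:ℕ):ℤ) - s)
      + (-1)^s * intChoose (a + 2*s - 1) ((s:ℤ) - 1) * intChoose (a + (n+1) + s - 1) (((n:ℤ)+1) - s) := by
    intro s
    have harg : a - 1 + ((n+1:ℕ):ℤ) + s = a + (n+1) + s - 1 := by push_cast; ring
    have harg2 : (((n+1:ℕ):ℤ) - s) = ((n:ℤ)+1) - s := by push_cast; ring
    rcases eq_or_lt_of_le (show (0:ℤ) ≤ a + 2*s by positivity) with h | h
    · have hs : (s:ℤ) = 0 := by omega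
      have ha' : a = 0 := by omega
      rw [harg, harg2, ic_lt (show a + (n+1) + (s:ℤ) - 1 < (n:ℤ)+1 - s by omega)]
      ring
    · rw [harg, harg2, ic_pascal (s:ℤ) (by omega),
        show a + 2*(s:ℤ) - 1 = a - 1 + 2*s by ring]
      ring
  rw [Finset.sum_congr rfl (fun s _ => term s), Finset.sum_add_distrib]
  have hP : (∑ s ∈ Finset.range (n+2), (-1:ℤ)^s * intChoose (a - 1 + 2*s) s *
      intChoose (a - 1 + (n+1:ℕ) + s) (((n+1:ℕ):ℤ) - s)) = icF (a-1) (n+1) := rfl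
  have hQ : (∑ s ∈ Finset.range (n+2), (-1:ℤ)^s * intChoose (a + 2*s - 1) ((s:ℤ) - 1) *
      intChoose (a + ((n:ℤ)+1) + s - 1) (((n:ℤ)+1) - s)) = - icF (a+1) n := by
    rw [Finset.sum_range_succ', icF, ← Finset.sum_neg_distrib]
    have h0 : (-1:ℤ)^(0:ℕ) * intChoose (a + 2*((0:ℕ):ℤ) - 1) (((0:ℕ):ℤ) - 1) *
        intChoose (a + ((n:ℤ)+1) + ((0:ℕ):ℤ) - 1) (((n:ℤ)+1) - ((0:ℕ):ℤ)) = 0 := by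
      rw [ic_neg_right _ (show ((0:ℕ):ℤ) - 1 < 0 by norm_num)]
      ring
    rw [h0, add_zero]
    refine Finset.sum_congr rfl (fun r _ => ?_)
    rw [show a + 2*((r+1:ℕ):ℤ) - 1 = a + 1 + 2*r by push_cast; ring,
      show ((r+1:ℕ):ℤ) - 1 = (r:ℤ) by push_cast; ring,
      show a + ((n:ℤ)+1) + ((r+1:ℕ):ℤ) - 1 = a + 1 + n + r by push_cast; ring,
      show ((n:ℤ)+1) - ((r+1:ℕ):ℤ) = (n:ℤ) - r by push_cast; ring,
      pow_succ]
    ring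
  rw [hP, hQ]
  ring

lemma icF_eq : ∀ n : ℕ, ∀ a : ℤ, (0 ≤ a ∨ (a = -1 ∧ 1 ≤ n)) → icF a n = (-1)^n := by
  intro n
  induction n with
  | zero =>
    rintro a (ha | ⟨rfl, h⟩)
    · simpa using icF_zero ha
    · omega
  | succ n ih =>
    have key : ∀ b : ℕ, icF ((b:ℤ) - 1) (n+1) = (-1)^(n+1) := by
      intro b
      induction b with
      | zero =>
        rw [show ((0:ℕ):ℤ) - 1 = -1 by norm_num, icF_neg_one, ih 1 (Or.inl (by norm_num))]
        ring
      | succ b ihb =>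
        have hb0 : (0:ℤ) ≤ ((b:ℤ) + 1) - 1 := by push_cast; omega
        rw [show ((b+1:ℕ):ℤ) - 1 = (b:ℤ) + 1 - 1 by push_cast; ring] at *
        rw [icF_split (by omega), icF_split2 (by omega),
          show ((b:ℤ)+1-1-1 : ℤ) = (b:ℤ) - 1 by ring, ihb,
          ih ((b:ℤ)+1-1+1) (Or.inl (by omega)),
          ih ((b:ℤ)+1-1) (Or.inl (by omega))]
        ring
    rintro a (ha | ⟨rfl, h⟩)
    · have := key (a+1).toNat
      rwa [show (((a+1).toNat : ℤ)) - 1 = a by omega] at this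
    · have := key 0
      rwa [show ((0:ℕ):ℤ) - 1 = -1 by norm_num] at this

lemma entry_sum (m K i j : ℕ) (hi : i < K) (hj : j < K) :
    (∑ k ∈ Finset.range K, (-1:ℤ)^(k+j) * intChoose ((m:ℤ) + 2*k) ((k:ℤ) - i) *
      (intChoose ((m:ℤ)+k+j) ((m:ℤ)+2*k) + intChoose ((m:ℤ)+k+j-1) ((m:ℤ)+2*k)))
    = if i = j then 1 else 0 := by
  -- rewrite each term using symmetry of binomial coefficients
  have term : ∀ k : ℕ,
      (-1:ℤ)^(k+j) * intChoose ((m:ℤ) + 2*k) ((k:ℤ) - i) *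
        (intChoose ((m:ℤ)+k+j) ((m:ℤ)+2*k) + intChoose ((m:ℤ)+k+j-1) ((m:ℤ)+2*k)) =
      (-1:ℤ)^(k+j) * intChoose ((m:ℤ) + 2*k) ((k:ℤ) - i) *
        (intChoose ((m:ℤ)+k+j) ((j:ℤ)-k) + intChoose ((m:ℤ)+k+j-1) ((j:ℤ)-k-1)) := by
    intro k
    have e1 : intChoose ((m:ℤ)+k+j) ((m:ℤ)+2*k) = intChoose ((m:ℤ)+k+j) ((j:ℤ)-k) := by
      rw [ic_symm _ (by positivity), show (m:ℤ)+k+j - ((m:ℤ)+2*k) = (j:ℤ)-k by ring]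
    have e2 : intChoose ((m:ℤ)+k+j-1) ((m:ℤ)+2*k) = intChoose ((m:ℤ)+k+j-1) ((j:ℤ)-k-1) := by
      rcases lt_or_ge ((m:ℤ)+k+j-1) 0 with h | h
      · rw [ic_neg_left _ h, ic_neg_left _ h]
      · rw [ic_symm _ h, show (m:ℤ)+k+j-1 - ((m:ℤ)+2*k) = (j:ℤ)-k-1 by ring]
    rw [e1, e2]
  rw [Finset.sum_congr rfl (fun k _ => term k)]
  rcases lt_or_ge j i with hji | hij
  · -- below the diagonal: every term vanishes
    rw [if_neg (by omega)]
    refine Finset.sum_eq_zero (fun k _ => ?_)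
    rcases lt_or_ge k i with hk | hk
    · rw [ic_neg_right _ (show (k:ℤ) - i < 0 by push_cast; omega)]
      ring
    · rw [ic_neg_right _ (show (j:ℤ) - k < 0 by push_cast; omega),
        ic_neg_right _ (show (j:ℤ) - k - 1 < 0 by push_cast; omega)]
      ring
  · -- on or above the diagonal
    set n := j - i with hn
    set a : ℤ := (m:ℤ) + 2*i with hadef
    have ha : 0 ≤ a := by positivity
    have hja : (j:ℤ) = (i:ℤ) + n := by push_cast; omega
    -- restrict the sum to the interval [i, j]
    rw [← Finset.sum_subset (show Finset.Ico i (j+1) ⊆ Finset.range K by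
        intro x hx; simp only [Finset.mem_Ico] at hx; exact Finset.mem_range.2 (by omega))
      (fun k _ hk => by
        simp only [Finset.mem_Ico, not_and, not_lt] at hk
        rcases lt_or_ge k i with hki | hki
        · rw [ic_neg_right _ (show (k:ℤ) - i < 0 by push_cast; omega)]; ring
        · have : j + 1 ≤ k := hk hki
          rw [ic_neg_right _ (show (j:ℤ) - k < 0 by push_cast; omega),
            ic_neg_right _ (show (j:ℤ) - k - 1 < 0 by push_cast; omega)]
          ring)]
    rw [Finset.sum_Ico_eq_sum_range]
    have hcount : j + 1 - i = n + 1 := by omega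
    rw [hcount]
    -- identify each term with the corresponding icF-terms
    have term2 : ∀ s : ℕ,
        (-1:ℤ)^(i+s+j) * intChoose ((m:ℤ) + 2*(i+s:ℕ)) (((i+s:ℕ):ℤ) - i) *
          (intChoose ((m:ℤ)+(i+s:ℕ)+j) ((j:ℤ)-(i+s:ℕ)) + intChoose ((m:ℤ)+(i+s:ℕ)+j-1) ((j:ℤ)-(i+s:ℕ)-1)) =
        (-1:ℤ)^n * ((-1)^s * intChoose (a + 2*s) s * intChoose (a + n + s) ((n:ℤ) - s))
        + (-1:ℤ)^n * ((-1)^s * intChoose (a + 2*s) s * intChoose (a + n + s - 1) ((n:ℤ) - s - 1)) := by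
      intro s
      have hsign : (-1:ℤ)^(i+s+j) = (-1)^n * (-1)^s := by
        rw [show i+s+j = (n + s) + 2*i by omega, pow_add, pow_mul, pow_add]
        norm_num
      rw [hsign,
        show (m:ℤ) + 2*(i+s:ℕ) = a + 2*s by push_cast; ring,
        show ((i+s:ℕ):ℤ) - i = (s:ℤ) by push_cast; ring,
        show (m:ℤ)+(i+s:ℕ)+j = a + n + s by rw [hja]; push_cast; ring,
        show (j:ℤ)-((i+s:ℕ):ℤ) = (n:ℤ) - s by rw [hja]; push_cast; ring]
      ring
    rw [Finset.sum_congr rfl (fun s _ => term2 (by exact s)), Finset.sum_add_distrib,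
      ← Finset.mul_sum, ← Finset.mul_sum, ← icF]
    rcases Nat.eq_zero_or_pos n with h0 | hpos
    · -- diagonal entry
      rw [if_pos (by omega), icF_eq n a (Or.inl ha)]
      have hS2 : (∑ s ∈ Finset.range (n+1),
          (-1:ℤ)^s * intChoose (a + 2*s) s * intChoose (a + n + s - 1) ((n:ℤ) - s - 1)) = 0 := by
        simp only [h0]
        norm_num [Finset.sum_range_one, ic_neg_right _ (show (-1:ℤ) < 0 by norm_num)]
      rw [hS2, ← pow_add, ← two_mul, pow_mul]
      norm_num
    · rw [if_neg (by omega), icF_eq n a (Or.inl ha)]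
      obtain ⟨p, hp⟩ : ∃ p, n = p + 1 := ⟨n - 1, by omega⟩
      simp only [hp]
      rw [Finset.sum_range_succ,
        ic_neg_right _ (show ((p+1:ℕ):ℤ) - (p+1:ℕ) - 1 < 0 by push_cast; omega)]
      have : ∀ s : ℕ, (-1:ℤ)^s * intChoose (a + 2*s) s * intChoose (a + (p+1:ℕ) + s - 1) (((p+1:ℕ):ℤ) - s - 1)
          = (-1:ℤ)^s * intChoose (a + 2*s) s * intChoose (a + (p:ℕ) + s) (((p:ℕ):ℤ) - s) := by
        intro s
        rw [show a + ((p+1:ℕ):ℤ) + s - 1 = a + (p:ℕ) + s by push_cast; ring,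
          show ((p+1:ℕ):ℤ) - s - 1 = ((p:ℕ):ℤ) - s by push_cast; ring]
      rw [Finset.sum_congr rfl (fun s _ => this s), ← icF, icF_eq p a (Or.inl ha), pow_succ]
      ring

/-- Binomial matrix inversion (Proposition 3.9): with 1-based indices
`i, j ∈ {1, …, K}` (represented here by `i, j : Fin K` shifted by one),
the matrix `M_{i,j} = C(m + 2(j−1), j−i)` satisfies `M · N = 1` where
`N_{i,j} = (−1)^{i+j} (C(m+i+j−2, m+2i−2) + C(m+i+j−3, m+2i−2))`;
in particular `M` is invertible and `N = M⁻¹`. -/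
theorem binomial_matrix_inverse (m K : ℕ) (hK : 1 ≤ K)
    (M N : Matrix (Fin K) (Fin K) ℚ)
    (hM : ∀ i j : Fin K, M i j =
      (intChoose ((m : ℤ) + 2 * (j : ℤ)) ((j : ℤ) - (i : ℤ)) : ℚ))
    (hN : ∀ i j : Fin K, N i j =
      (-1) ^ ((i : ℕ) + (j : ℕ)) *
        ((intChoose ((m : ℤ) + (i : ℤ) + (j : ℤ)) ((m : ℤ) + 2 * (i : ℤ)) : ℚ) +
         (intChoose ((m : ℤ) + (i : ℤ) + (j : ℤ) - 1) ((m : ℤ) + 2 * (i : ℤ)) : ℚ))) :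
    M * N = 1 ∧ IsUnit M ∧ N = M⁻¹ := by

  have hMN : M * N = 1 := by
    ext i j
    rw [Matrix.mul_apply, Matrix.one_apply]
    have hterm : ∀ k : Fin K, M i k * N k j =
        (((-1:ℤ)^((k:ℕ)+(j:ℕ)) * intChoose ((m:ℤ) + 2*((k:ℕ):ℤ)) (((k:ℕ):ℤ) - ((i:ℕ):ℤ)) *
          (intChoose ((m:ℤ)+((k:ℕ):ℤ)+((j:ℕ):ℤ)) ((m:ℤ)+2*((k:ℕ):ℤ)) +
           intChoose ((m:ℤ)+((k:ℕ):ℤ)+((j:ℕ):ℤ)-1) ((m:ℤ)+2*((k:ℕ):ℤ))) : ℤ) : ℚ) := by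
      intro k
      rw [hM, hN]
      push_cast
      ring
    rw [Finset.sum_congr rfl (fun k _ => hterm k), ← Int.cast_sum,
      Fin.sum_univ_eq_sum_range (fun k : ℕ =>
        (-1:ℤ)^(k+(j:ℕ)) * intChoose ((m:ℤ) + 2*(k:ℤ)) ((k:ℤ) - ((i:ℕ):ℤ)) *
        (intChoose ((m:ℤ)+(k:ℤ)+((j:ℕ):ℤ)) ((m:ℤ)+2*(k:ℤ)) +
         intChoose ((m:ℤ)+(k:ℤ)+((j:ℕ):ℤ)-1) ((m:ℤ)+2*(k:ℤ)))) K,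
      entry_sum m K i j i.isLt j.isLt]
    simp [Fin.ext_iff, apply_ite (fun z : ℤ => (z : ℚ))]
  exact ⟨hMN, (Matrix.isUnit_iff_isUnit_det M).2 (Matrix.isUnit_det_of_right_inverse hMN), (Matrix.inv_eq_right_inv hMN).symm⟩
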